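/- Let p ≥ 3 be a prime and k ≥ 1 an integer such that (p−1)/gcd(k, p−1) is even and gcd(k, p−1) ≥ 2. Let θ ∈ ℰ_p with θ ≠ 1 and |θ − 1|_p < |k|_p. Then the Ising–Potts mapping f_θ has infinitely many periodic points: the set {x ∈ ℚ_p : x ≠ −θ, and f_θ^m(x) = x for some m ≥ 1 with the orbit of x defined} is infinite. -/

import Mathlib

namespace IsingAux

variable {p : ℕ} [hp : Fact p.Prime]

lemma norm_add_eq_left {a b : ℚ_[p]} (h : ‖b‖ < ‖a‖) : ‖a + b‖ = ‖a‖ := by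
  rw [Padic.add_eq_max_of_ne (show ‖a‖ ≠ ‖b‖ from ne_of_gt h)]
  exact max_eq_left h.le

lemma norm_sum_le_of_le {s : Finset ℕ} {f : ℕ → ℚ_[p]} {C : ℝ} (hC : 0 ≤ C)
    (h : ∀ i ∈ s, ‖f i‖ ≤ C) : ‖∑ i ∈ s, f i‖ ≤ C := by
  classical
  revert h
  induction s using Finset.induction_on with
  | empty => intro _; simpa using hC
  | @insert a s' hx ih =>
    intro h
    rw [Finset.sum_insert hx]
    refine le_trans (Padic.nonarchimedean _ _) (max_le ?_ ?_)
    · exact h a (Finset.mem_insert_self a s')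
    · exact ih fun i hi => h i (Finset.mem_insert_of_mem hi)

/-- step-down: norms of nonzero elements are powers of p -/
lemma norm_step {x y : ℚ_[p]} (hx : x ≠ 0) (h : ‖x‖ < ‖y‖) : ‖x‖ ≤ ‖y‖ * (p : ℝ)⁻¹ := by
  have hy : y ≠ 0 := by
    rintro rfl; simp at h; exact absurd h (not_lt.mpr (norm_nonneg x))
  have hp1 : (1 : ℝ) < (p : ℝ) := by exact_mod_cast hp.out.one_lt
  rw [Padic.norm_eq_zpow_neg_valuation hx, Padic.norm_eq_zpow_neg_valuation hy] at *
  have hlt : -x.valuation < -y.valuation := by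
    by_contra hcon
    push_neg at hcon
    exact absurd (zpow_le_zpow_right₀ hp1.le hcon) (not_le.mpr h)
  have hle : -x.valuation ≤ -y.valuation - 1 := by omega
  calc (p:ℝ) ^ (-x.valuation) ≤ (p:ℝ) ^ (-y.valuation - 1) := zpow_le_zpow_right₀ hp1.le hle
    _ = (p:ℝ) ^ (-y.valuation) * (p:ℝ)⁻¹ := by
        rw [zpow_sub₀ (by positivity), zpow_one]; ring

lemma norm_nat_le_one (n : ℕ) : ‖(n : ℚ_[p])‖ ≤ 1 := by
  have := Padic.norm_int_le_one (p := p) (n : ℤ)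
  simpa using this

lemma norm_nat_lt_one_iff (n : ℕ) : ‖(n : ℚ_[p])‖ < 1 ↔ p ∣ n := by
  have := Padic.norm_intCast_lt_one_iff (p := p) (k := (n : ℤ))
  simp only [Int.cast_natCast] at this
  rw [this]
  exact Int.natCast_dvd_natCast

lemma norm_nat_eq_one_of_not_dvd {n : ℕ} (h : ¬ p ∣ n) : ‖(n : ℚ_[p])‖ = 1 :=
  le_antisymm (norm_nat_le_one n) (not_lt.mp (fun hc => h ((norm_nat_lt_one_iff n).mp hc)))

/-- ‖t^j - s^j‖ ≤ M^(j-1) ‖t-s‖ -/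
lemma pow_sub_pow_norm_le (t s : ℚ_[p]) {M : ℝ} (ht : ‖t‖ ≤ M) (hs : ‖s‖ ≤ M) :
    ∀ j : ℕ, ‖t ^ j - s ^ j‖ ≤ M ^ (j - 1) * ‖t - s‖ := by
  have hM : 0 ≤ M := le_trans (norm_nonneg t) ht
  intro j
  induction j with
  | zero => simp
  | succ j ih =>
    have key : t ^ (j+1) - s ^ (j+1) = t ^ j * (t - s) + (t ^ j - s ^ j) * s := by ring
    rw [key]
    refine le_trans (Padic.nonarchimedean _ _) (max_le ?_ ?_)
    · rw [norm_mul]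
      have : ‖t ^ j‖ ≤ M ^ j := by
        rw [norm_pow]; exact pow_le_pow_left₀ (norm_nonneg t) ht j
      calc ‖t^j‖ * ‖t - s‖ ≤ M ^ j * ‖t - s‖ := by
            exact mul_le_mul_of_nonneg_right this (norm_nonneg _)
        _ = M ^ ((j+1)-1) * ‖t-s‖ := by simp
    · rw [norm_mul]
      rcases Nat.eq_zero_or_pos j with rfl | hj
      · simp
      · calc ‖t^j - s^j‖ * ‖s‖ ≤ (M ^ (j-1) * ‖t-s‖) * M := by
              exact mul_le_mul ih hs (norm_nonneg s) (by positivity)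
          _ = M ^ ((j+1)-1) * ‖t-s‖ := by
              rw [show (j+1)-1 = (j-1)+1 by omega]; ring

/-- ‖(1+w)^n - 1‖ ≤ ‖w‖ when ‖w‖ ≤ 1 -/
lemma one_add_pow_sub_one_norm_le {w : ℚ_[p]} (hw : ‖w‖ ≤ 1) (n : ℕ) :
    ‖(1 + w) ^ n - 1‖ ≤ ‖w‖ := by
  have := pow_sub_pow_norm_le (1 + w) 1 (M := 1)
    (le_trans (Padic.nonarchimedean _ _) (by simp [hw])) (by simp) n
  simpa using this


lemma lt_pow_aux (j : ℕ) (hj : 2 ≤ j) : j < 3 ^ (j - 1) := by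
  induction j, hj using Nat.le_induction with
  | base => norm_num
  | succ n hn ih =>
    have h2 : 3 ^ (n - 1) * 3 = 3 ^ (n + 1 - 1) := by
      rw [← pow_succ]; congr 1; omega
    omega


lemma norm_j_ge {j : ℕ} (hj : 2 ≤ j) (hp3 : 3 ≤ p) :
    ((p:ℝ)⁻¹) ^ (j - 2) ≤ ‖(j : ℚ_[p])‖ := by
  have hj0 : j ≠ 0 := by omega
  set v := j.factorization p with hv
  have hfact : p ^ v * (j / p ^ v) = j := Nat.ordProj_mul_ordCompl_eq_self j p
  have hndvd : ¬ p ∣ (j / p ^ v) := Nat.not_dvd_ordCompl hp.out hj0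
  have hnormm : ‖((j / p ^ v : ℕ) : ℚ_[p])‖ = 1 := by
    refine le_antisymm ?_ (not_lt.mp fun hc => hndvd ((norm_nat_lt_one_iff _).mp hc))
    exact_mod_cast Padic.norm_int_le_one (p := p) (((j / p ^ v : ℕ) : ℤ))
  have hnorm : ‖(j : ℚ_[p])‖ = ((p:ℝ)⁻¹) ^ v := by
    conv_lhs => rw [← hfact]
    push_cast
    rw [norm_mul, norm_pow, Padic.norm_p, hnormm, mul_one]
  rw [hnorm]
  have hple : p ^ v ≤ j := Nat.ordProj_le p hj0
  have hjlt : j < p ^ (j - 1) := by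
    calc j < 3 ^ (j - 1) := lt_pow_aux j hj
      _ ≤ p ^ (j - 1) := Nat.pow_le_pow_left hp3 _
  have hvle : v ≤ j - 2 := by
    have h1 : p ^ v < p ^ (j - 1) := lt_of_le_of_lt hple hjlt
    have h2 : v < j - 1 := (Nat.pow_lt_pow_iff_right (show 1 < p by omega)).mp h1
    omega
  have hpinv : (0:ℝ) < (p:ℝ)⁻¹ := by positivity
  have hpinv1 : (p:ℝ)⁻¹ ≤ 1 := by
    rw [inv_le_one_iff₀]; right; exact_mod_cast (by omega : (1:ℕ) ≤ p)
  exact pow_le_pow_of_le_one hpinv.le hpinv1 hvle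

lemma choose_norm_le {K j : ℕ} (hj : 1 ≤ j) (hjK : j ≤ K) :
    ‖(K.choose j : ℚ_[p])‖ * ‖(j : ℚ_[p])‖ ≤ ‖(K : ℚ_[p])‖ := by
  obtain ⟨K', rfl⟩ : ∃ K', K = K' + 1 := ⟨K - 1, by omega⟩
  obtain ⟨j', rfl⟩ : ∃ j', j = j' + 1 := ⟨j - 1, by omega⟩
  have hid : (K' + 1) * K'.choose j' = (K' + 1).choose (j' + 1) * (j' + 1) :=
    Nat.add_one_mul_choose_eq K' j'
  have hcast : ((K' + 1 : ℕ) : ℚ_[p]) * (K'.choose j' : ℚ_[p])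
      = ((K' + 1).choose (j' + 1) : ℚ_[p]) * ((j' + 1 : ℕ) : ℚ_[p]) := by
    exact_mod_cast congrArg (fun n : ℕ => (n : ℚ_[p])) hid
  have hnorm := congrArg (fun x : ℚ_[p] => ‖x‖) hcast
  simp only [norm_mul] at hnorm
  rw [← hnorm]
  have h1 : ‖(K'.choose j' : ℚ_[p])‖ ≤ 1 := by
    have := Padic.norm_int_le_one (p := p) ((K'.choose j' : ℕ) : ℤ)
    simpa using this
  calc ‖((K' + 1 : ℕ) : ℚ_[p])‖ * ‖(K'.choose j' : ℚ_[p])‖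
      ≤ ‖((K' + 1 : ℕ) : ℚ_[p])‖ * 1 := by
        exact mul_le_mul_of_nonneg_left h1 (norm_nonneg _)
    _ = ‖((K' + 1 : ℕ) : ℚ_[p])‖ := mul_one _

lemma term_bound (hp3 : 3 ≤ p) {K j : ℕ} (hj : 2 ≤ j) (hjK : j ≤ K) :
    ‖(K.choose j : ℚ_[p])‖ * ((p:ℝ)⁻¹) ^ (j - 1) ≤ ‖(K : ℚ_[p])‖ * (p:ℝ)⁻¹ := by
  have hjnorm : (0:ℝ) < ‖(j : ℚ_[p])‖ := by
    rw [norm_pos_iff]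
    exact_mod_cast (by omega : j ≠ 0)
  have h1 : ‖(K.choose j : ℚ_[p])‖ ≤ ‖(K : ℚ_[p])‖ / ‖(j : ℚ_[p])‖ := by
    rw [le_div_iff₀ hjnorm]
    exact choose_norm_le (by omega) hjK
  have h2 : ((p:ℝ)⁻¹) ^ (j - 1) = ((p:ℝ)⁻¹) ^ (j - 2) * (p:ℝ)⁻¹ := by
    rw [← pow_succ]; congr 1; omega
  have hpinv : (0:ℝ) < (p:ℝ)⁻¹ := by positivity
  calc ‖(K.choose j : ℚ_[p])‖ * ((p:ℝ)⁻¹) ^ (j - 1)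
      ≤ (‖(K : ℚ_[p])‖ / ‖(j : ℚ_[p])‖) * ((p:ℝ)⁻¹) ^ (j - 1) := by
        exact mul_le_mul_of_nonneg_right h1 (by positivity)
    _ = ‖(K : ℚ_[p])‖ * (((p:ℝ)⁻¹) ^ (j - 2) / ‖(j : ℚ_[p])‖) * (p:ℝ)⁻¹ := by
        rw [h2]; ring
    _ ≤ ‖(K : ℚ_[p])‖ * 1 * (p:ℝ)⁻¹ := by
        have : ((p:ℝ)⁻¹) ^ (j - 2) / ‖(j : ℚ_[p])‖ ≤ 1 := by
          rw [div_le_one hjnorm]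
          exact norm_j_ge hj hp3
        have hKnn : (0:ℝ) ≤ ‖(K : ℚ_[p])‖ := norm_nonneg _
        gcongr
    _ = ‖(K : ℚ_[p])‖ * (p:ℝ)⁻¹ := by ring


lemma key_tail (hp3 : 3 ≤ p) {K : ℕ} (hK : 1 ≤ K) {t s : ℚ_[p]}
    (ht : ‖t‖ ≤ (p:ℝ)⁻¹) (hs : ‖s‖ ≤ (p:ℝ)⁻¹) :
    ‖(1+t)^K - (1+s)^K - (K : ℚ_[p])*(t-s)‖ ≤ ‖(K : ℚ_[p])‖ * (p:ℝ)⁻¹ * ‖t - s‖ := by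
  obtain ⟨K', rfl⟩ : ∃ K', K = K' + 1 := ⟨K - 1, by omega⟩
  have hexp : ∀ w : ℚ_[p], (1+w)^(K'+1) = ∑ j ∈ Finset.range (K'+2), w ^ j * ((K'+1).choose j : ℚ_[p]) := by
    intro w
    rw [show (1+w) = (w+1) by ring, add_pow]
    refine Finset.sum_congr rfl fun j hj => by ring
  have hsplit : (1+t)^(K'+1) - (1+s)^(K'+1) - ((K'+1 : ℕ) : ℚ_[p])*(t-s)
      = ∑ i ∈ Finset.range K', (t ^ (i+1+1) - s ^ (i+1+1)) * (((K'+1).choose (i+1+1) : ℕ) : ℚ_[p]) := by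
    rw [hexp t, hexp s, ← Finset.sum_sub_distrib]
    have hcong : ∀ j ∈ Finset.range (K'+2),
        t ^ j * (((K'+1).choose j : ℕ) : ℚ_[p]) - s ^ j * (((K'+1).choose j : ℕ) : ℚ_[p])
        = (t ^ j - s ^ j) * (((K'+1).choose j : ℕ) : ℚ_[p]) := fun j _ => by ring
    rw [Finset.sum_congr rfl hcong]
    rw [Finset.sum_range_succ' (fun j => (t ^ j - s ^ j) * (((K'+1).choose j : ℕ) : ℚ_[p])) (K'+1)]
    rw [Finset.sum_range_succ' (fun j => (t ^ (j+1) - s ^ (j+1)) * (((K'+1).choose (j+1) : ℕ) : ℚ_[p])) K']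
    simp only [pow_zero, pow_one, sub_self, zero_mul, add_zero]
    rw [Nat.choose_one_right]
    push_cast
    ring
  rw [hsplit]
  have hC : (0:ℝ) ≤ ‖((K'+1 : ℕ) : ℚ_[p])‖ * (p:ℝ)⁻¹ * ‖t - s‖ := by positivity
  refine norm_sum_le_of_le hC fun i hi => ?_
  have hiK : i + 1 + 1 ≤ K' + 1 := by
    have := Finset.mem_range.mp hi; omega
  rw [norm_mul]
  have h1 : ‖t ^ (i+1+1) - s ^ (i+1+1)‖ ≤ ((p:ℝ)⁻¹) ^ (i+1) * ‖t - s‖ := by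
    have := pow_sub_pow_norm_le t s ht hs (i+1+1)
    simpa using this
  have h2 := term_bound (p := p) hp3 (show 2 ≤ i + 1 + 1 by omega) hiK
  calc ‖t ^ (i+1+1) - s ^ (i+1+1)‖ * ‖(((K'+1).choose (i+1+1) : ℕ) : ℚ_[p])‖
      ≤ (((p:ℝ)⁻¹) ^ (i+1) * ‖t - s‖) * ‖(((K'+1).choose (i+1+1) : ℕ) : ℚ_[p])‖ := by
        exact mul_le_mul_of_nonneg_right h1 (norm_nonneg _)
    _ = (‖(((K'+1).choose (i+1+1) : ℕ) : ℚ_[p])‖ * ((p:ℝ)⁻¹) ^ ((i+1+1)-1)) * ‖t - s‖ := by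
        rw [show (i+1+1)-1 = i+1 by omega]; ring
    _ ≤ (‖((K'+1 : ℕ) : ℚ_[p])‖ * (p:ℝ)⁻¹) * ‖t - s‖ := by
        exact mul_le_mul_of_nonneg_right h2 (norm_nonneg _)
    _ = ‖((K'+1 : ℕ) : ℚ_[p])‖ * (p:ℝ)⁻¹ * ‖t - s‖ := by ring

lemma pow_diff_norm_eq (hp3 : 3 ≤ p) {K : ℕ} (hK : 1 ≤ K) {t s : ℚ_[p]}
    (ht : ‖t‖ ≤ (p:ℝ)⁻¹) (hs : ‖s‖ ≤ (p:ℝ)⁻¹) :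
    ‖(1+t)^K - (1+s)^K‖ = ‖(K : ℚ_[p])‖ * ‖t - s‖ := by
  rcases eq_or_ne t s with rfl | hne
  · simp
  have hKne : ((K : ℚ_[p])) ≠ 0 := Nat.cast_ne_zero.mpr (by omega)
  have hts : (0:ℝ) < ‖t - s‖ := norm_pos_iff.mpr (sub_ne_zero_of_ne hne)
  have hmain : ‖(K : ℚ_[p]) * (t - s)‖ = ‖(K : ℚ_[p])‖ * ‖t - s‖ := norm_mul _ _
  have hKpos : 0 < ‖(K : ℚ_[p])‖ := norm_pos_iff.mpr hKne
  have htail := key_tail hp3 hK ht hs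
  have hlt : ‖(1+t)^K - (1+s)^K - (K : ℚ_[p])*(t-s)‖ < ‖(K : ℚ_[p]) * (t - s)‖ := by
    rw [hmain]
    refine lt_of_le_of_lt htail ?_
    have hpinv1 : (p:ℝ)⁻¹ < 1 := by
      rw [inv_lt_one_iff₀]; right; exact_mod_cast (by omega : 1 < p)
    calc ‖(K : ℚ_[p])‖ * (p:ℝ)⁻¹ * ‖t - s‖ < ‖(K : ℚ_[p])‖ * 1 * ‖t - s‖ := by
          gcongr
      _ = ‖(K : ℚ_[p])‖ * ‖t - s‖ := by ring
  have := norm_add_eq_left (a := (K : ℚ_[p]) * (t - s))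
    (b := (1+t)^K - (1+s)^K - (K : ℚ_[p])*(t-s)) hlt
  rw [← hmain, ← this]
  congr 1
  ring

lemma exists_kth_root (hp3 : 3 ≤ p) {K : ℕ} (hK : 1 ≤ K) {u : ℚ_[p]}
    (hu : ‖u - 1‖ ≤ ‖(K : ℚ_[p])‖ * (p:ℝ)⁻¹) :
    ∃ t : ℚ_[p], ‖t‖ ≤ (p:ℝ)⁻¹ ∧ (1+t)^K = u := by
  have hKne : ((K : ℚ_[p])) ≠ 0 := Nat.cast_ne_zero.mpr (by omega)
  have hKpos : 0 < ‖(K : ℚ_[p])‖ := norm_pos_iff.mpr hKne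
  set r : ℝ := (p:ℝ)⁻¹ with hr
  have hr0 : 0 ≤ r := by positivity
  have hr1 : r < 1 := by
    rw [hr, inv_lt_one_iff₀]; right; exact_mod_cast (by omega : 1 < p)
  set S : Set ℚ_[p] := {t | ‖t‖ ≤ r} with hS
  have hSclosed : IsClosed S := isClosed_le continuous_norm continuous_const
  haveI : CompleteSpace S := hSclosed.completeSpace_coe
  haveI : Nonempty S := ⟨⟨0, by simp [hS, hr0]⟩⟩
  set T : ℚ_[p] → ℚ_[p] := fun t => t - ((1+t)^K - u)/(K : ℚ_[p]) with hT
  -- self map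
  have hself : ∀ t : ℚ_[p], ‖t‖ ≤ r → ‖T t‖ ≤ r := by
    intro t htr
    have halg : T t = (u - 1)/(K : ℚ_[p]) - ((1+t)^K - 1 - (K : ℚ_[p])*t)/(K : ℚ_[p]) := by
      rw [hT]; field_simp; ring
    rw [halg]
    have h1 : ‖(u - 1)/(K : ℚ_[p])‖ ≤ r := by
      rw [norm_div, div_le_iff₀ hKpos]
      calc ‖u - 1‖ ≤ ‖(K : ℚ_[p])‖ * r := hu
        _ = r * ‖(K : ℚ_[p])‖ := by ring
    have h2 : ‖((1+t)^K - 1 - (K : ℚ_[p])*t)/(K : ℚ_[p])‖ ≤ r := by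
      rw [norm_div, div_le_iff₀ hKpos]
      have := key_tail hp3 hK (s := 0) htr (by simpa using hr0)
      simp only [sub_zero, one_pow] at this
      calc ‖(1+t)^K - 1 - (K : ℚ_[p])*t‖ ≤ ‖(K : ℚ_[p])‖ * r * ‖t‖ := by
            simpa using this
        _ ≤ ‖(K : ℚ_[p])‖ * r * r := by
            have h0 : (0:ℝ) ≤ ‖(K : ℚ_[p])‖ * r := by positivity
            exact mul_le_mul_of_nonneg_left htr h0
        _ ≤ ‖(K : ℚ_[p])‖ * r * 1 := by
            have h0 : (0:ℝ) ≤ ‖(K : ℚ_[p])‖ * r := by positivity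
            exact mul_le_mul_of_nonneg_left hr1.le h0
        _ = r * ‖(K : ℚ_[p])‖ := by ring
    calc ‖(u - 1)/(K : ℚ_[p]) - ((1+t)^K - 1 - (K : ℚ_[p])*t)/(K : ℚ_[p])‖
        ≤ max ‖(u - 1)/(K : ℚ_[p])‖ ‖((1+t)^K - 1 - (K : ℚ_[p])*t)/(K : ℚ_[p])‖ := by
          rw [sub_eq_add_neg]
          refine le_trans (Padic.nonarchimedean _ _) ?_
          simp
      _ ≤ r := max_le h1 h2
  -- contraction
  have hcontr : ∀ t s : ℚ_[p], ‖t‖ ≤ r → ‖s‖ ≤ r → ‖T t - T s‖ ≤ r * ‖t - s‖ := by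
    intro t s htr hsr
    have halg : T t - T s = -(((1+t)^K - (1+s)^K - (K : ℚ_[p])*(t-s))/(K : ℚ_[p])) := by
      rw [hT]; field_simp; ring
    rw [halg, norm_neg, norm_div, div_le_iff₀ hKpos]
    calc ‖(1+t)^K - (1+s)^K - (K : ℚ_[p])*(t-s)‖ ≤ ‖(K : ℚ_[p])‖ * r * ‖t - s‖ :=
          key_tail hp3 hK htr hsr
      _ = r * ‖t - s‖ * ‖(K : ℚ_[p])‖ := by ring
  set K₀ : NNReal := ⟨r, hr0⟩ with hK₀
  set T' : S → S := fun t => ⟨T t.1, hself t.1 t.2⟩ with hT'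
  have hlip : LipschitzWith K₀ T' := by
    refine LipschitzWith.of_dist_le_mul fun x y => ?_
    simp only [Subtype.dist_eq]
    rw [dist_eq_norm, dist_eq_norm]
    exact hcontr x.1 y.1 x.2 y.2
  have hcw : ContractingWith K₀ T' := by
    constructor
    · exact_mod_cast hr1
    · exact hlip
  set t₀ := ContractingWith.fixedPoint T' hcw with ht₀def
  have ht₀ : T' t₀ = t₀ := ContractingWith.fixedPoint_isFixedPt hcw
  refine ⟨t₀.1, t₀.2, ?_⟩
  have : T t₀.1 = t₀.1 := congrArg Subtype.val ht₀
  rw [hT] at this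
  have h0 : ((1+t₀.1)^K - u)/(K : ℚ_[p]) = 0 := by
    have := sub_eq_self.mp this
    exact this
  rw [div_eq_zero_iff] at h0
  rcases h0 with h0 | h0
  · exact sub_eq_zero.mp h0
  · exact absurd h0 hKne

lemma exists_two_roots_zmod (hp3 : 3 ≤ p) {k : ℕ} (hk : 1 ≤ k)
    (heven : Even ((p - 1) / Nat.gcd k (p - 1))) (hgcd : 2 ≤ Nat.gcd k (p - 1)) :
    ∃ β β' : ZMod p, β ^ k = -1 ∧ β' ^ k = -1 ∧ β ≠ β' := by
  obtain ⟨g, hg⟩ := IsCyclic.exists_generator (α := (ZMod p)ˣ)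
  have hcard : Fintype.card (ZMod p)ˣ = p - 1 := ZMod.card_units p
  have horder : orderOf g = p - 1 := by
    rw [orderOf_eq_card_of_forall_mem_zpowers hg, Nat.card_eq_fintype_card, hcard]
  set d := Nat.gcd k (p - 1) with hd
  have hdvd : d ∣ p - 1 := Nat.gcd_dvd_right _ _
  obtain ⟨e, he⟩ := heven
  have hpe : p - 1 = d * (e + e) := by
    rw [← he]
    exact (Nat.mul_div_cancel' hdvd).symm
  have he1 : 1 ≤ e := by
    rcases Nat.eq_zero_or_pos e with rfl | h
    · omega
    · exact h
  have hgpow : g ^ (p - 1) = 1 := by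
    rw [← hcard]; exact pow_card_eq_one
  have hed : e * d + e * d = p - 1 := by rw [hpe]; ring
  have hx2 : g ^ (e * d) * g ^ (e * d) = 1 := by
    rw [← pow_add, hed]; exact hgpow
  have hedpos : 0 < e * d := by positivity
  have hxne : g ^ (e * d) ≠ 1 := by
    intro hcon
    have hdd := orderOf_dvd_of_pow_eq_one hcon
    rw [horder] at hdd
    have hle := Nat.le_of_dvd hedpos hdd
    omega
  have hxval : ((g ^ (e * d) : (ZMod p)ˣ) : ZMod p) = -1 := by
    have h2 : ((g ^ (e*d) : (ZMod p)ˣ) : ZMod p) * ((g ^ (e*d) : (ZMod p)ˣ) : ZMod p) = 1 := by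
      rw [← Units.val_mul, hx2, Units.val_one]
    rcases mul_self_eq_one_iff.mp h2 with h | h
    · exact absurd (Units.ext (h.trans Units.val_one.symm)) hxne
    · exact h
  set a := Nat.gcdA k (p - 1) with ha
  set bc := Nat.gcdB k (p - 1) with hbc
  have hbez : (d : ℤ) = k * a + (p - 1 : ℕ) * bc := Nat.gcd_eq_gcd_ab k (p - 1)
  set βu := g ^ (a * e : ℤ) with hβu
  have hgz : g ^ ((p - 1 : ℕ) : ℤ) = 1 := by rw [zpow_natCast, hgpow]
  have hβk : βu ^ k = g ^ (e * d) := by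
    have hexp : (a * e) * (k:ℤ) = ((e * d : ℕ) : ℤ) + ((p - 1 : ℕ) : ℤ) * (-(bc * e)) := by
      push_cast
      linear_combination (-(e : ℤ)) * hbez
    calc βu ^ k = (g ^ (a * e : ℤ)) ^ (k : ℤ) := by rw [hβu, zpow_natCast]
      _ = g ^ ((a * e) * (k : ℤ)) := by rw [← zpow_mul]
      _ = g ^ (((e * d : ℕ) : ℤ) + ((p - 1 : ℕ) : ℤ) * (-(bc * e))) := by rw [hexp]
      _ = g ^ ((e * d : ℕ) : ℤ) * (g ^ ((p - 1 : ℕ) : ℤ)) ^ (-(bc * e)) := by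
          rw [zpow_add, zpow_mul]
      _ = g ^ (e * d) := by rw [hgz, one_zpow, mul_one, zpow_natCast]
  set ζ := g ^ (e + e) with hζ
  have hkd : d ∣ k := Nat.gcd_dvd_left _ _
  have hζk : ζ ^ k = 1 := by
    have hh : (e + e) * k = (p - 1) * (k / d) := by
      conv_lhs => rw [← Nat.mul_div_cancel' hkd]
      rw [hpe]; ring
    rw [hζ, ← pow_mul, hh, pow_mul, hgpow, one_pow]
  have hζne : ζ ≠ 1 := by
    intro hcon
    have hdd := orderOf_dvd_of_pow_eq_one hcon
    rw [horder] at hdd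
    have hle := Nat.le_of_dvd (by omega) hdd
    have h2 : 2 * (e + e) ≤ d * (e + e) := Nat.mul_le_mul_right _ hgcd
    omega
  refine ⟨(βu : ZMod p), ((βu * ζ : (ZMod p)ˣ) : ZMod p), ?_, ?_, ?_⟩
  · rw [← Units.val_pow_eq_pow_val, hβk, hxval]
  · rw [← Units.val_pow_eq_pow_val, mul_pow, hζk, mul_one, hβk, hxval]
  · intro hcon
    have h1 : βu = βu * ζ := Units.ext hcon
    exact hζne (mul_eq_left.mp h1.symm)

lemma exists_exact_root (hp3 : 3 ≤ p) {k : ℕ} (hk : 1 ≤ k) {β : ZMod p} (hβ : β ^ k = -1) :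
    ∃ ω : ℚ_[p], ω ^ k = -1 ∧ ‖ω - ((β.val : ℕ) : ℚ_[p])‖ ≤ (p:ℝ)⁻¹ ∧ ‖ω‖ = 1 := by
  haveI : NeZero p := ⟨hp.out.ne_zero⟩
  have hβ0 : β ≠ 0 := by
    intro hcon
    rw [hcon, zero_pow (by omega : k ≠ 0)] at hβ
    exact absurd hβ.symm (neg_ne_zero.mpr one_ne_zero)
  set n := β.val with hn
  have hndvd : ¬ p ∣ n := by
    intro hcon
    have := Nat.eq_zero_of_dvd_of_lt hcon (ZMod.val_lt β)
    exact hβ0 (ZMod.val_eq_zero β |>.mp this)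
  have hcast : ((n : ℕ) : ZMod p) = β := by
    rw [hn, ZMod.natCast_val, ZMod.cast_id]
  set a : ℚ_[p] := (n : ℚ_[p]) with haa
  have hanorm : ‖a‖ = 1 := norm_nat_eq_one_of_not_dvd hndvd
  have ha0 : a ≠ 0 := by
    intro hcon; rw [hcon, norm_zero] at hanorm; norm_num at hanorm
  have hap0 : a ^ (p - 1) ≠ 0 := pow_ne_zero _ ha0
  -- Fermat
  have hfermat : ‖a ^ (p - 1) - 1‖ ≤ (p:ℝ)⁻¹ := by
    have hrepr : a ^ (p - 1) - 1 = (((n ^ (p - 1) - 1 : ℤ)) : ℚ_[p]) := by push_cast; ring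
    have hdvdz : (p : ℤ) ∣ (n ^ (p - 1) - 1 : ℤ) := by
      rw [← ZMod.intCast_zmod_eq_zero_iff_dvd]
      push_cast
      rw [hcast, ZMod.pow_card_sub_one_eq_one hβ0]
      ring
    have hlt : ‖a ^ (p - 1) - 1‖ < 1 := by
      rw [hrepr]
      exact Padic.norm_intCast_lt_one_iff.mpr hdvdz
    rcases eq_or_ne (a ^ (p - 1) - 1) 0 with h0 | h0
    · rw [h0, norm_zero]; positivity
    · have := norm_step h0 (y := 1) (by simpa using hlt)
      simpa using this
  have hInorm : ‖((p - 1 : ℕ) : ℚ_[p])‖ = 1 := by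
    refine norm_nat_eq_one_of_not_dvd ?_
    intro hcon
    have := Nat.le_of_dvd (by omega) hcon
    omega
  have hu0 : ‖(a ^ (p - 1))⁻¹ - 1‖ ≤ ‖((p - 1 : ℕ) : ℚ_[p])‖ * (p:ℝ)⁻¹ := by
    have halg : (a ^ (p - 1))⁻¹ - 1 = (1 - a ^ (p - 1)) * (a ^ (p - 1))⁻¹ := by
      field_simp
    rw [halg, norm_mul, norm_inv, norm_pow, hanorm, one_pow, inv_one, mul_one,
      norm_sub_rev, hInorm, one_mul]
    exact hfermat
  obtain ⟨t, htnorm, htpow⟩ := exists_kth_root hp3 (K := p - 1) (by omega) hu0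
  set z : ℚ_[p] := a * (1 + t) with hz
  have hpinv1 : (p:ℝ)⁻¹ < 1 := by
    rw [inv_lt_one_iff₀]; right; exact_mod_cast (by omega : 1 < p)
  have h1t : ‖1 + t‖ = 1 := by
    have := norm_add_eq_left (a := (1:ℚ_[p])) (b := t)
      (by rw [norm_one]; exact lt_of_le_of_lt htnorm hpinv1)
    simpa using this
  have hznorm : ‖z‖ = 1 := by rw [hz, norm_mul, hanorm, h1t, mul_one]
  have hz1 : z ^ (p - 1) = 1 := by
    rw [hz, mul_pow, htpow, mul_inv_cancel₀ hap0]
  have hza : ‖z - a‖ ≤ (p:ℝ)⁻¹ := by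
    have : z - a = a * t := by rw [hz]; ring
    rw [this, norm_mul, hanorm, one_mul]
    exact htnorm
  -- z^k ≡ -1 mod p
  have hzk_close : ‖z ^ k + 1‖ < 1 := by
    have hsplit : z ^ k + 1 = (z ^ k - a ^ k) + (a ^ k + 1) := by ring
    have h1 : ‖z ^ k - a ^ k‖ < 1 := by
      have := pow_sub_pow_norm_le z a (M := 1) (by rw [hznorm]) (by rw [hanorm]) k
      simp only [one_pow, one_mul] at this
      exact lt_of_le_of_lt (le_trans this hza) hpinv1
    have h2 : ‖a ^ k + 1‖ < 1 := by
      have hrepr : a ^ k + 1 = (((n ^ k + 1 : ℤ)) : ℚ_[p]) := by push_cast; ring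
      rw [hrepr]
      refine Padic.norm_intCast_lt_one_iff.mpr ?_
      rw [← ZMod.intCast_zmod_eq_zero_iff_dvd]
      push_cast
      rw [hcast, hβ]
      ring
    rw [hsplit]
    exact lt_of_le_of_lt (Padic.nonarchimedean _ _) (max_lt h1 h2)
  set η : ℚ_[p] := -(z ^ k) with hη
  have hη1 : ‖η - 1‖ < 1 := by
    have : η - 1 = -(z ^ k + 1) := by rw [hη]; ring
    rw [this, norm_neg]; exact hzk_close
  have hpodd : Odd p := hp.out.odd_of_ne_two (by omega)
  have hpeven : Even (p - 1) := Nat.Odd.sub_odd hpodd odd_one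
  have hηp : η ^ (p - 1) = 1 := by
    rw [hη, neg_pow, hpeven.neg_one_pow, one_mul, ← pow_mul, mul_comm k (p-1), pow_mul, hz1,
      one_pow]
  have hηone : η = 1 := by
    by_contra hne
    have hgeom : (∑ i ∈ Finset.range (p - 1), η ^ i) * (η - 1) = η ^ (p - 1) - 1 :=
      geom_sum_mul η (p - 1)
    rw [hηp, sub_self] at hgeom
    have hsum0 : (∑ i ∈ Finset.range (p - 1), η ^ i) = 0 := by
      rcases mul_eq_zero.mp hgeom with h | h
      · exact h
      · exact absurd (sub_eq_zero.mp h) hne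
    have hsplit : (∑ i ∈ Finset.range (p - 1), η ^ i)
        = ((p - 1 : ℕ) : ℚ_[p]) + ∑ i ∈ Finset.range (p - 1), (η ^ i - 1) := by
      rw [Finset.sum_sub_distrib, Finset.sum_const, Finset.card_range, nsmul_eq_mul, mul_one]
      ring
    have hrest : ‖∑ i ∈ Finset.range (p - 1), (η ^ i - 1)‖ < 1 := by
      refine lt_of_le_of_lt (norm_sum_le_of_le (norm_nonneg (η - 1)) fun i _ => ?_) hη1
      have := one_add_pow_sub_one_norm_le (w := η - 1) (le_of_lt (lt_of_lt_of_le hη1 le_rfl)) i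
      simpa using this
    have hnorm1 : ‖∑ i ∈ Finset.range (p - 1), η ^ i‖ = 1 := by
      rw [hsplit, norm_add_eq_left (by rw [hInorm]; exact hrest), hInorm]
    rw [hsum0, norm_zero] at hnorm1
    norm_num at hnorm1
  refine ⟨z, ?_, hza, hznorm⟩
  have h := hηone
  rw [hη] at h
  linear_combination -h

end IsingAux

/-- The Ising–Potts mapping `f_θ(x) = ((θx + 1)/(x + θ))^k` on `ℚ_p`. -/
noncomputable def isingPotts (p : ℕ) [Fact p.Prime] (θ : ℚ_[p]) (k : ℕ) (x : ℚ_[p]) : ℚ_[p] :=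
  ((θ * x + 1) / (x + θ)) ^ k

/-- `ℰ_p = {x ∈ ℚ_p : |x|_p = 1, |x - 1|_p < p^{-1/(p-1)}}`. -/
noncomputable def padicExpDomain (p : ℕ) [Fact p.Prime] : Set ℚ_[p] :=
  {x | ‖x‖ = 1 ∧ ‖x - 1‖ < (p : ℝ) ^ (-(1 : ℝ) / ((p : ℝ) - 1))}

open IsingAux

/-- let `p ≥ 3` be prime and `k ≥ 1` with `(p-1)/gcd(k,p-1)` even and
`gcd(k,p-1) ≥ 2`; let `θ ∈ ℰ_p`, `θ ≠ 1`, `|θ - 1|_p < |k|_p`. Then `f_θ` has infinitely many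
periodic points (with well-defined forward orbits). -/
theorem isingPotts_infinitely_many_periodic_points
    (p : ℕ) [Fact p.Prime] (hp : 3 ≤ p) (k : ℕ) (hk : 1 ≤ k)
    (heven : Even ((p - 1) / Nat.gcd k (p - 1))) (hgcd : 2 ≤ Nat.gcd k (p - 1))
    (θ : ℚ_[p]) (hθE : θ ∈ padicExpDomain p) (hθ1 : θ ≠ 1)
    (hθk : ‖θ - 1‖ < ‖(k : ℚ_[p])‖) :
    {x : ℚ_[p] | (∀ n : ℕ, (isingPotts p θ k)^[n] x ≠ -θ) ∧
      ∃ m : ℕ, 1 ≤ m ∧ (isingPotts p θ k)^[m] x = x}.Infinite := by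
  classical
  set f : ℚ_[p] → ℚ_[p] := isingPotts p θ k with hfdef
  have hpinvpos : (0:ℝ) < (p:ℝ)⁻¹ := by positivity
  have hpinv1 : (p:ℝ)⁻¹ < 1 := by
    rw [inv_lt_one_iff₀]; right; exact_mod_cast (by omega : 1 < p)
  -- θ facts
  have hknorm1 : ‖(k:ℚ_[p])‖ ≤ 1 := norm_nat_le_one k
  have hθ1lt : ‖θ - 1‖ < 1 := lt_of_lt_of_le hθk hknorm1
  have hθm1 : θ - 1 ≠ 0 := sub_ne_zero.mpr hθ1
  have h2norm : ‖(2:ℚ_[p])‖ = 1 := by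
    have : ((2:ℕ) : ℚ_[p]) = (2:ℚ_[p]) := by norm_num
    rw [← this]
    refine norm_nat_eq_one_of_not_dvd ?_
    intro hc
    have := Nat.le_of_dvd (by norm_num) hc
    omega
  have hθp1 : ‖θ + 1‖ = 1 := by
    have heq : θ + 1 = 2 + (θ - 1) := by ring
    rw [heq, norm_add_eq_left (by rw [h2norm]; exact hθ1lt), h2norm]
  have hθp1ne : θ + 1 ≠ 0 := by
    intro hc; rw [hc, norm_zero] at hθp1; norm_num at hθp1
  set ε : ℚ_[p] := 1 - θ^2 with hεdef
  have hεfac : ε = -((θ - 1) * (θ + 1)) := by rw [hεdef]; ring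
  have hεnorm : ‖ε‖ = ‖θ - 1‖ := by
    rw [hεfac, norm_neg, norm_mul, hθp1, mul_one]
  have hε0 : ε ≠ 0 := by
    rw [hεfac]
    exact neg_ne_zero.mpr (mul_ne_zero hθm1 hθp1ne)
  have hknormpos : (0:ℝ) < ‖(k:ℚ_[p])‖ :=
    norm_pos_iff.mpr (Nat.cast_ne_zero.mpr (by omega))
  have hεk : ‖ε‖ ≤ ‖(k:ℚ_[p])‖ * (p:ℝ)⁻¹ := by
    rw [hεnorm]
    exact norm_step hθm1 hθk
  -- roots of -1
  obtain ⟨β, β', hβ, hβ', hββ'⟩ := exists_two_roots_zmod hp hk heven hgcd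
  obtain ⟨ω, hωk, hωβ, hωnorm⟩ := exists_exact_root hp hk hβ
  obtain ⟨ω', hω'k, hω'β, hω'norm⟩ := exists_exact_root hp hk hβ'
  haveI : NeZero p := ⟨(Fact.out : p.Prime).ne_zero⟩
  have hcastval : ∀ γ : ZMod p, ((γ.val : ℕ) : ZMod p) = γ := fun γ => by
    rw [ZMod.natCast_val, ZMod.cast_id]
  have hint_norm_one : ∀ z : ℤ, ¬ ((z : ZMod p) = 0) → ‖(z : ℚ_[p])‖ = 1 := by
    intro z hz
    refine le_antisymm (Padic.norm_int_le_one z) (not_lt.mp fun hc => hz ?_)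
    rw [ZMod.intCast_zmod_eq_zero_iff_dvd]
    exact Padic.norm_intCast_lt_one_iff.mp hc
  haveI : Fact (2 < p) := ⟨by omega⟩
  have hneg1ne1 : (-1 : ZMod p) ≠ 1 := ZMod.neg_one_ne_one
  have hβne1 : ∀ γ : ZMod p, γ ^ k = -1 → γ ≠ 1 := by
    intro γ hγ hc
    rw [hc, one_pow] at hγ
    exact hneg1ne1 hγ.symm
  have hvaldiff : ‖((β.val : ℚ_[p]) - (β'.val : ℚ_[p]))‖ = 1 := by
    have hrepr : (β.val : ℚ_[p]) - (β'.val : ℚ_[p]) = (((β.val : ℤ) - (β'.val : ℤ) : ℤ) : ℚ_[p]) := by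
      push_cast; ring
    rw [hrepr]
    refine hint_norm_one _ ?_
    intro hc
    push_cast at hc
    rw [hcastval, hcastval] at hc
    exact hββ' (by linear_combination hc)
  have hωω' : ‖ω - ω'‖ = 1 := by
    have heq : ω - ω' = ((β.val : ℚ_[p]) - (β'.val : ℚ_[p]))
        + ((ω - (β.val : ℚ_[p])) - (ω' - (β'.val : ℚ_[p]))) := by ring
    rw [heq, norm_add_eq_left, hvaldiff]
    rw [hvaldiff]
    refine lt_of_le_of_lt ?_ hpinv1
    rw [sub_eq_add_neg]
    refine le_trans (Padic.nonarchimedean _ _) (max_le hωβ ?_)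
    rw [norm_neg]; exact hω'β
  have hc1norm : ∀ (γ : ZMod p) (c : ℚ_[p]), γ ^ k = -1 → ‖c - (γ.val : ℚ_[p])‖ ≤ (p:ℝ)⁻¹ →
      ‖c - 1‖ = 1 := by
    intro γ c hγk hcβ
    have hγ1 : γ ≠ 1 := hβne1 γ hγk
    have hval1 : ‖((γ.val : ℚ_[p]) - 1)‖ = 1 := by
      have hrepr : (γ.val : ℚ_[p]) - 1 = (((γ.val : ℤ) - 1 : ℤ) : ℚ_[p]) := by push_cast; ring
      rw [hrepr]
      refine hint_norm_one _ ?_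
      intro hc
      push_cast at hc
      rw [hcastval] at hc
      exact hγ1 (by linear_combination hc)
    have heq : c - 1 = ((γ.val : ℚ_[p]) - 1) + (c - (γ.val : ℚ_[p])) := by ring
    rw [heq, norm_add_eq_left, hval1]
    rw [hval1]
    exact lt_of_le_of_lt hcβ hpinv1
  have hω1 : ‖ω - 1‖ = 1 := hc1norm β ω hβ hωβ
  have hω'1 : ‖ω' - 1‖ = 1 := hc1norm β' ω' hβ' hω'β
  -- the root function
  have hrootfun : ∀ u : ℚ_[p], ∃ t : ℚ_[p],
      ‖u - 1‖ ≤ ‖(k:ℚ_[p])‖ * (p:ℝ)⁻¹ → (‖t‖ ≤ (p:ℝ)⁻¹ ∧ (1+t)^k = u) := by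
    intro u
    by_cases h : ‖u - 1‖ ≤ ‖(k:ℚ_[p])‖ * (p:ℝ)⁻¹
    · obtain ⟨t, h1, h2⟩ := exists_kth_root hp hk h
      exact ⟨t, fun _ => ⟨h1, h2⟩⟩
    · exact ⟨0, fun hc => absurd hc h⟩
  choose R hR using hrootfun
  set g : ℚ_[p] → ℚ_[p] → ℚ_[p] := fun c y => c * (1 + R (θ - ε/(y - θ))) with hgdef
  set U : Set ℚ_[p] := {y | ‖y - ω‖ ≤ (p:ℝ)⁻¹ ∨ ‖y - ω'‖ ≤ (p:ℝ)⁻¹} with hUdef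
  have hωU : ω ∈ U := Or.inl (by simp [hpinvpos.le])
  -- distance to θ on U
  have hUθ : ∀ y ∈ U, ‖y - θ‖ = 1 := by
    intro y hy
    have key : ∀ c : ℚ_[p], ‖c - 1‖ = 1 → ‖y - c‖ ≤ (p:ℝ)⁻¹ → ‖y - θ‖ = 1 := by
      intro c hc1 hyc
      have heq : y - θ = ((c - 1) + (1 - θ)) + (y - c) := by ring
      have h1 : ‖(c - 1) + (1 - θ)‖ = 1 := by
        rw [norm_add_eq_left, hc1]
        rw [hc1, norm_sub_rev]; exact hθ1lt
      rw [heq, norm_add_eq_left, h1]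
      rw [h1]
      exact lt_of_le_of_lt hyc hpinv1
    rcases hy with hy | hy
    · exact key ω hω1 hy
    · exact key ω' hω'1 hy
  have hUθne : ∀ y ∈ U, y - θ ≠ 0 := by
    intro y hy hc
    have := hUθ y hy
    rw [hc, norm_zero] at this
    norm_num at this
  -- the u-value is in the root domain
  have hUu : ∀ y ∈ U, ‖(θ - ε/(y - θ)) - 1‖ ≤ ‖(k:ℚ_[p])‖ * (p:ℝ)⁻¹ := by
    intro y hy
    have heq : (θ - ε/(y - θ)) - 1 = (θ - 1) + (-(ε/(y-θ))) := by ring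
    rw [heq]
    refine le_trans (Padic.nonarchimedean _ _) (max_le ?_ ?_)
    · rw [← hεnorm]; exact hεk
    · rw [norm_neg, norm_div, hUθ y hy, div_one]
      exact hεk
  have hgood : ∀ c : ℚ_[p], c ^ k = -1 → ‖c‖ = 1 → ∀ y ∈ U,
      ‖g c y - c‖ ≤ (p:ℝ)⁻¹ ∧ (g c y) ^ k = ε/(y - θ) - θ := by
    intro c hck hcnorm y hy
    obtain ⟨ht, hpow⟩ := hR (θ - ε/(y - θ)) (hUu y hy)
    constructor
    · have heq : g c y - c = c * R (θ - ε/(y - θ)) := by rw [hgdef]; ring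
      rw [heq, norm_mul, hcnorm, one_mul]
      exact ht
    · have heq : (g c y) ^ k = c ^ k * (1 + R (θ - ε/(y - θ))) ^ k := by
        rw [hgdef]; rw [mul_pow]
      rw [heq, hpow, hck]
      ring
  have hglip : ∀ c : ℚ_[p], ‖c‖ = 1 → ∀ y₁ ∈ U, ∀ y₂ ∈ U,
      ‖g c y₁ - g c y₂‖ ≤ (p:ℝ)⁻¹ * ‖y₁ - y₂‖ := by
    intro c hcnorm y₁ h₁ y₂ h₂
    obtain ⟨ht₁, hpow₁⟩ := hR (θ - ε/(y₁ - θ)) (hUu y₁ h₁)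
    obtain ⟨ht₂, hpow₂⟩ := hR (θ - ε/(y₂ - θ)) (hUu y₂ h₂)
    set t₁ := R (θ - ε/(y₁ - θ))
    set t₂ := R (θ - ε/(y₂ - θ))
    have hdiffnorm : ‖(k:ℚ_[p])‖ * ‖t₁ - t₂‖ = ‖(θ - ε/(y₁ - θ)) - (θ - ε/(y₂ - θ))‖ := by
      rw [← pow_diff_norm_eq hp hk ht₁ ht₂, hpow₁, hpow₂]
    have hu12 : ‖(θ - ε/(y₁ - θ)) - (θ - ε/(y₂ - θ))‖ = ‖ε‖ * ‖y₁ - y₂‖ := by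
      have hy1 : y₁ - θ ≠ 0 := hUθne y₁ h₁
      have hy2 : y₂ - θ ≠ 0 := hUθne y₂ h₂
      have halg : (θ - ε/(y₁ - θ)) - (θ - ε/(y₂ - θ))
          = ε * (y₁ - y₂) / ((y₁ - θ) * (y₂ - θ)) := by
        field_simp
        ring
      rw [halg, norm_div, norm_mul, norm_mul, hUθ y₁ h₁, hUθ y₂ h₂]
      norm_num
    have hbound : ‖t₁ - t₂‖ * ‖(k:ℚ_[p])‖ ≤ ((p:ℝ)⁻¹ * ‖y₁ - y₂‖) * ‖(k:ℚ_[p])‖ := by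
      rw [mul_comm, hdiffnorm, hu12]
      calc ‖ε‖ * ‖y₁ - y₂‖ ≤ (‖(k:ℚ_[p])‖ * (p:ℝ)⁻¹) * ‖y₁ - y₂‖ :=
            mul_le_mul_of_nonneg_right hεk (norm_nonneg _)
        _ = ((p:ℝ)⁻¹ * ‖y₁ - y₂‖) * ‖(k:ℚ_[p])‖ := by ring
    have ht12 : ‖t₁ - t₂‖ ≤ (p:ℝ)⁻¹ * ‖y₁ - y₂‖ :=
      le_of_mul_le_mul_right (by simpa [mul_comm] using hbound) hknormpos
    have heq : g c y₁ - g c y₂ = c * (t₁ - t₂) := by rw [hgdef]; ring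
    rw [heq, norm_mul, hcnorm, one_mul]
    exact ht12
  have hdisj : ∀ y : ℚ_[p], ‖y - ω'‖ ≤ (p:ℝ)⁻¹ → ¬ (‖y - ω‖ ≤ (p:ℝ)⁻¹) := by
    intro y h1 h2
    have heq : ω - ω' = (ω - y) + (y - ω') := by ring
    have : ‖ω - ω'‖ ≤ (p:ℝ)⁻¹ := by
      rw [heq]
      refine le_trans (Padic.nonarchimedean _ _) (max_le ?_ h1)
      rw [norm_sub_rev]; exact h2
    rw [hωω'] at this
    linarith
  -- φ and the conjugacy identity
  set φ : ℚ_[p] → ℚ_[p] := fun v => ε/(v - θ) - θ with hφdef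
  have hfφ : ∀ v : ℚ_[p], v - θ ≠ 0 → f (φ v) = v ^ k := by
    intro v hv
    have h1 : φ v + θ = ε/(v - θ) := by rw [hφdef]; ring
    have h2 : θ * (φ v) + 1 = ε * v / (v - θ) := by
      rw [hφdef, hεdef]
      field_simp
      ring
    have h3 : (θ * (φ v) + 1) / (φ v + θ) = v := by
      rw [div_eq_iff (by rw [h1]; exact div_ne_zero hε0 hv), h1, h2, mul_div_assoc]
      ring
    rw [hfdef]
    show ((θ * (φ v) + 1) / (φ v + θ)) ^ k = v ^ k
    rw [h3]
  -- per-period existence of a periodic point with prescribed itinerary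
  have main : ∀ m : ℕ, 1 ≤ m → ∃ x : ℚ_[p],
      (∀ n : ℕ, f^[n] x ≠ -θ) ∧ f^[m] x = x ∧
      (∀ n : ℕ, (‖(θ + ε/(f^[n] x + θ)) - ω‖ ≤ (p:ℝ)⁻¹ ↔ m ∣ n)) := by
    intro m hm
    have hgU : ∀ y ∈ U, ∀ j : ℕ, (g ω')^[j] y ∈ U := by
      intro y hy j
      induction j with
      | zero => simpa using hy
      | succ j ih =>
        rw [Function.iterate_succ_apply']
        exact Or.inr ((hgood ω' hω'k hω'norm _ ih).1)
    have hgiterLip : ∀ y₁ ∈ U, ∀ y₂ ∈ U, ∀ j : ℕ,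
        ‖(g ω')^[j] y₁ - (g ω')^[j] y₂‖ ≤ ‖y₁ - y₂‖ := by
      intro y₁ h₁ y₂ h₂ j
      induction j with
      | zero => simp
      | succ j ih =>
        rw [Function.iterate_succ_apply', Function.iterate_succ_apply']
        refine le_trans (hglip ω' hω'norm _ (hgU _ h₁ j) _ (hgU _ h₂ j)) ?_
        calc (p:ℝ)⁻¹ * ‖(g ω')^[j] y₁ - (g ω')^[j] y₂‖
            ≤ 1 * ‖y₁ - y₂‖ := mul_le_mul hpinv1.le ih (norm_nonneg _) zero_le_one
          _ = ‖y₁ - y₂‖ := one_mul _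
    set Φ : ℚ_[p] → ℚ_[p] := fun y => g ω ((g ω')^[m-1] y) with hΦdef
    have hΦD : ∀ y ∈ U, ‖Φ y - ω‖ ≤ (p:ℝ)⁻¹ := fun y hy =>
      (hgood ω hωk hωnorm _ (hgU y hy (m-1))).1
    have hΦU : ∀ y ∈ U, Φ y ∈ U := fun y hy => Or.inl (hΦD y hy)
    have hΦLip : ∀ y₁ ∈ U, ∀ y₂ ∈ U, ‖Φ y₁ - Φ y₂‖ ≤ (p:ℝ)⁻¹ * ‖y₁ - y₂‖ := by
      intro y₁ h₁ y₂ h₂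
      refine le_trans (hglip ω hωnorm _ (hgU _ h₁ _) _ (hgU _ h₂ _)) ?_
      exact mul_le_mul_of_nonneg_left (hgiterLip y₁ h₁ y₂ h₂ (m-1)) hpinvpos.le
    have hUclosed : IsClosed U := by
      refine IsClosed.union ?_ ?_ <;>
        exact isClosed_le ((continuous_id.sub continuous_const).norm) continuous_const
    haveI : CompleteSpace U := hUclosed.completeSpace_coe
    haveI : Nonempty U := ⟨⟨ω, hωU⟩⟩
    set T : U → U := fun y => ⟨Φ y.1, hΦU y.1 y.2⟩ with hTdef
    have hcw : ContractingWith ⟨(p:ℝ)⁻¹, hpinvpos.le⟩ T := by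
      constructor
      · exact_mod_cast hpinv1
      · refine LipschitzWith.of_dist_le_mul fun a b => ?_
        simp only [hTdef, Subtype.dist_eq]
        rw [dist_eq_norm, dist_eq_norm]
        exact hΦLip a.1 a.2 b.1 b.2
    set vfix := ContractingWith.fixedPoint T hcw with hvfixdef
    have hvfix : T vfix = vfix := ContractingWith.fixedPoint_isFixedPt hcw
    set v₀ : ℚ_[p] := vfix.1 with hv₀def
    have hv₀U : v₀ ∈ U := vfix.2
    have hΦv₀ : Φ v₀ = v₀ := congrArg Subtype.val hvfix
    set v : ℕ → ℚ_[p] := fun n => if n % m = 0 then v₀ else g ω' ((g ω')^[m - 1 - n % m] v₀)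
      with hvdef
    have hv0 : ∀ n, n % m = 0 → v n = v₀ := by
      intro n h; simp only [hvdef]; rw [if_pos h]
    have hv1 : ∀ n, n % m ≠ 0 → v n = g ω' ((g ω')^[m - 1 - n % m] v₀) := by
      intro n h; simp only [hvdef]; rw [if_neg h]
    have hvU : ∀ n, v n ∈ U := by
      intro n
      by_cases h : n % m = 0
      · rw [hv0 n h]; exact hv₀U
      · rw [hv1 n h]
        exact Or.inr ((hgood ω' hω'k hω'norm _ (hgU v₀ hv₀U _)).1)
    have hvDω : ∀ n, n % m = 0 → ‖v n - ω‖ ≤ (p:ℝ)⁻¹ := by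
      intro n h
      rw [hv0 n h, ← hΦv₀]
      exact hΦD v₀ hv₀U
    have hvDω' : ∀ n, n % m ≠ 0 → ‖v n - ω'‖ ≤ (p:ℝ)⁻¹ := by
      intro n h
      rw [hv1 n h]
      exact (hgood ω' hω'k hω'norm _ (hgU v₀ hv₀U _)).1
    have hit : ∀ j : ℕ, g ω' ((g ω')^[j] v₀) = (g ω')^[j+1] v₀ := fun j =>
      (Function.iterate_succ_apply' (g ω') j v₀).symm
    have hchain : ∀ n : ℕ, (v n = g ω (v (n+1)) ∨ v n = g ω' (v (n+1))) := by
      intro n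
      rcases Nat.lt_or_ge 1 m with hm2 | hm1
      · -- 2 ≤ m
        have h1m : (1 : ℕ) % m = 1 := Nat.mod_eq_of_lt hm2
        have hsucc : (n+1) % m = (n % m + 1) % m := by
          conv_lhs => rw [Nat.add_mod, h1m]
        have hrlt : n % m < m := Nat.mod_lt n (by omega)
        by_cases h0 : n % m = 0
        · left
          have hmod1 : (n+1) % m = 1 := by rw [hsucc, h0]; exact Nat.mod_eq_of_lt hm2
          have hvn1 : v (n+1) = (g ω')^[m-1] v₀ := by
            rw [hv1 (n+1) (by omega), hmod1, hit (m - 1 - 1),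
              show (m - 1 - 1) + 1 = m - 1 by omega]
          rw [hvn1, hv0 n h0]
          calc v₀ = Φ v₀ := hΦv₀.symm
            _ = g ω ((g ω')^[m-1] v₀) := by simp only [hΦdef]
        · by_cases h1 : n % m + 1 = m
          · right
            have hmod0 : (n+1) % m = 0 := by rw [hsucc, h1, Nat.mod_self]
            have hvn1 : v (n+1) = v₀ := hv0 (n+1) hmod0
            rw [hvn1, hv1 n h0, show m - 1 - n % m = 0 by omega,
              Function.iterate_zero_apply]
          · right
            have hmod : (n+1) % m = n % m + 1 := by
              rw [hsucc]; exact Nat.mod_eq_of_lt (by omega)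
            have hvn1 : v (n+1) = (g ω')^[m - 1 - n % m] v₀ := by
              rw [hv1 (n+1) (by omega), hmod, hit (m - 1 - (n % m + 1)),
                show (m - 1 - (n % m + 1)) + 1 = m - 1 - n % m by omega]
            rw [hvn1, hv1 n h0]
      · -- m = 1
        left
        have hm1' : m = 1 := by omega
        subst hm1'
        have hΦ1 : Φ v₀ = g ω v₀ := by
          simp only [hΦdef, Nat.sub_self, Function.iterate_zero_apply]
        rw [hv0 n (Nat.mod_one n), hv0 (n+1) (Nat.mod_one (n+1))]
        calc v₀ = Φ v₀ := hΦv₀.symm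
          _ = g ω v₀ := hΦ1
    have hvpow : ∀ n, (v n) ^ k = ε/(v (n+1) - θ) - θ := by
      intro n
      rcases hchain n with h | h
      · rw [h]; exact (hgood ω hωk hωnorm _ (hvU (n+1))).2
      · rw [h]; exact (hgood ω' hω'k hω'norm _ (hvU (n+1))).2
    have hvθne : ∀ n, v n - θ ≠ 0 := fun n => hUθne _ (hvU n)
    set x : ℕ → ℚ_[p] := fun n => φ (v n) with hxdef
    have hfx : ∀ n, f (x n) = x (n+1) := by
      intro n
      simp only [hxdef]
      rw [hfφ (v n) (hvθne n), hvpow n]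
    have hiter : ∀ n, f^[n] (x 0) = x n := by
      intro n
      induction n with
      | zero => rfl
      | succ n ih => rw [Function.iterate_succ_apply', ih, hfx]
    have hvm : v m = v 0 := by
      rw [hv0 m (Nat.mod_self m), hv0 0 (Nat.zero_mod m)]
    have hxm : x m = x 0 := by simp only [hxdef]; rw [hvm]
    have hxθ : ∀ n, x n + θ = ε/(v n - θ) := by
      intro n
      simp only [hxdef, hφdef]
      ring
    have hxθne : ∀ n, x n + θ ≠ 0 := by
      intro n
      rw [hxθ n]
      exact div_ne_zero hε0 (hvθne n)
    have hψ : ∀ n, θ + ε/(x n + θ) = v n := by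
      intro n
      rw [hxθ n]
      have hdd : ε/(ε/(v n - θ)) = v n - θ := by
        rw [div_div_eq_mul_div]
        exact mul_div_cancel_left₀ _ hε0
      rw [hdd]
      ring
    refine ⟨x 0, ?_, ?_, ?_⟩
    · intro n hcon
      rw [hiter n] at hcon
      apply hxθne n
      rw [hcon]
      ring
    · rw [hiter m]
      exact hxm
    · intro n
      rw [hiter n, hψ n]
      constructor
      · intro hle
        by_contra hnd
        have h0 : n % m ≠ 0 := fun hc => hnd (Nat.dvd_of_mod_eq_zero hc)
        exact hdisj (v n) (hvDω' n h0) hle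
      · intro hdvd
        exact hvDω n (Nat.mod_eq_zero_of_dvd hdvd)
  -- assemble: the periodic points for different periods are distinct
  have hchoice : ∀ m : ℕ, ∃ x : ℚ_[p],
      (∀ n : ℕ, f^[n] x ≠ -θ) ∧ f^[m+1] x = x ∧
      (∀ n : ℕ, (‖(θ + ε/(f^[n] x + θ)) - ω‖ ≤ (p:ℝ)⁻¹ ↔ (m+1) ∣ n)) :=
    fun m => main (m+1) (by omega)
  choose X hX using hchoice
  refine Set.infinite_of_injective_forall_mem (f := X) ?_ ?_
  · intro m₁ m₂ hEq
    have key : ∀ a b : ℕ, X a = X b → (b+1) ∣ (a+1) := by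
      intro a b hab
      have h1 : ‖(θ + ε/(f^[a+1] (X a) + θ)) - ω‖ ≤ (p:ℝ)⁻¹ :=
        ((hX a).2.2 (a+1)).mpr dvd_rfl
      rw [hab] at h1
      exact ((hX b).2.2 (a+1)).mp h1
    have h12 := key m₁ m₂ hEq
    have h21 := key m₂ m₁ hEq.symm
    have := Nat.dvd_antisymm h21 h12
    omega
  · intro m
    exact ⟨(hX m).1, m+1, by omega, (hX m).2.1⟩
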